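/- arXiv:1502.06520 — 3 statements merged into one kernel-verified Lean document; each statement's English description precedes it below -/
import Mathlib

section
/- Let s ≠ t be reflections in GL_n(ℚ) that generate a finite subgroup R = ⟨s, t⟩. Then ℚ[x_1,…,x_n]^R_det ∩ (ℚ[x_1,…,x_n]^s + ℚ[x_1,…,x_n]^t) = {0}; that is, the only relative invariant of R lying in the ℚ-linear span of the s-invariant polynomials together with the t-invariant polynomials is 0. -/
open Matrix MvPolynomial

/-- The action of an `n × n` rational matrix on `ℚ[x_1, …, x_n]` by linear substitution
of the variables: `x_i ↦ ∑ j, g j i • x_j`. -/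
noncomputable def matAct {n : ℕ} (g : Matrix (Fin n) (Fin n) ℚ) :
    MvPolynomial (Fin n) ℚ →ₐ[ℚ] MvPolynomial (Fin n) ℚ :=
  MvPolynomial.aeval fun i => ∑ j, MvPolynomial.C (g j i) * MvPolynomial.X j

/-- The fixed subspace of `g ∈ GL_n(ℚ)` acting on `ℚ^n`; for a reflection this is its
reflecting hyperplane. -/
noncomputable def fixedSpace {n : ℕ} (g : GL (Fin n) ℚ) : Submodule ℚ (Fin n → ℚ) :=
  LinearMap.ker (Matrix.toLin' (g : Matrix (Fin n) (Fin n) ℚ) - LinearMap.id)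

/-- A reflection is an involution in `GL_n(ℚ)` whose fixed subspace has dimension `n - 1`. -/
def IsReflection {n : ℕ} (r : GL (Fin n) ℚ) : Prop :=
  r * r = 1 ∧ Module.finrank ℚ (fixedSpace r) = n - 1

/-- The subspace `ℚ[x_1, …, x_n]^H` of polynomials invariant under a subgroup
`H ≤ GL_n(ℚ)`. -/
noncomputable def polyInvariants {n : ℕ} (H : Subgroup (GL (Fin n) ℚ)) :
    Submodule ℚ (MvPolynomial (Fin n) ℚ) where
  carrier := {f | ∀ g ∈ H, matAct ((g : GL (Fin n) ℚ) : Matrix (Fin n) (Fin n) ℚ) f = f}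
  add_mem' := by
    intro a b ha hb g hg
    rw [map_add, ha g hg, hb g hg]
  zero_mem' := by
    intro g hg
    rw [map_zero]
  smul_mem' := by
    intro c f hf g hg
    rw [_root_.map_smul, hf g hg]

/-- The relative invariants `ℚ[x_1, …, x_n]^H_det` (with respect to the determinant) of a
subgroup `H ≤ GL_n(ℚ)`: the polynomials `f` with `g • f = det g • f` for all `g ∈ H`. -/
noncomputable def polyRelInvariants {n : ℕ} (H : Subgroup (GL (Fin n) ℚ)) :
    Submodule ℚ (MvPolynomial (Fin n) ℚ) where
  carrier := {f | ∀ g ∈ H,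
    matAct ((g : GL (Fin n) ℚ) : Matrix (Fin n) (Fin n) ℚ) f
      = ((g : GL (Fin n) ℚ) : Matrix (Fin n) (Fin n) ℚ).det • f}
  add_mem' := by
    intro a b ha hb g hg
    rw [map_add, ha g hg, hb g hg, smul_add]
  zero_mem' := by
    intro g hg
    rw [map_zero, smul_zero]
  smul_mem' := by
    intro c f hf g hg
    rw [_root_.map_smul, hf g hg, smul_comm]

/-- The subspace `ℚ[x_1, …, x_n]^g` of polynomials fixed by a single element
`g ∈ GL_n(ℚ)`. -/
noncomputable def polyInvariantsElem {n : ℕ} (g : GL (Fin n) ℚ) :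
    Submodule ℚ (MvPolynomial (Fin n) ℚ) where
  carrier := {f | matAct ((g : GL (Fin n) ℚ) : Matrix (Fin n) (Fin n) ℚ) f = f}
  add_mem' := by
    intro a b ha hb
    rw [Set.mem_setOf_eq, map_add, ha, hb]
  zero_mem' := by
    rw [Set.mem_setOf_eq, map_zero]
  smul_mem' := by
    intro c f hf
    rw [Set.mem_setOf_eq, _root_.map_smul, hf]

lemma matAct_mul {n : ℕ} (M N : Matrix (Fin n) (Fin n) ℚ) (f : MvPolynomial (Fin n) ℚ) :
    matAct (M * N) f = matAct M (matAct N f) := by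
  have h : matAct (M * N) = (matAct M).comp (matAct N) := by
    apply MvPolynomial.algHom_ext
    intro i
    simp [matAct, Matrix.mul_apply, Finset.sum_mul, Finset.mul_sum, map_sum]
    rw [Finset.sum_comm]
    exact Finset.sum_congr rfl fun j _ => Finset.sum_congr rfl fun k _ => by ring
  rw [h]; rfl

lemma matAct_one {n : ℕ} (f : MvPolynomial (Fin n) ℚ) : matAct (1 : Matrix (Fin n) (Fin n) ℚ) f = f := by
  have h : matAct (1 : Matrix (Fin n) (Fin n) ℚ) = AlgHom.id ℚ _ := by
    apply MvPolynomial.algHom_ext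
    intro i
    simp [matAct, Matrix.one_apply]
  rw [h]; rfl

lemma det_prodMap' {M₁ M₂ : Type*} [AddCommGroup M₁] [Module ℚ M₁] [AddCommGroup M₂]
    [Module ℚ M₂] [FiniteDimensional ℚ M₁] [FiniteDimensional ℚ M₂]
    (f : Module.End ℚ M₁) (g : Module.End ℚ M₂) :
    LinearMap.det (f.prodMap g) = LinearMap.det f * LinearMap.det g := by
  classical
  let b₁ := Module.finBasis ℚ M₁
  let b₂ := Module.finBasis ℚ M₂
  rw [← LinearMap.det_toMatrix (b₁.prod b₂), LinearMap.toMatrix_prodMap,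
    Matrix.det_fromBlocks_zero₁₂, LinearMap.det_toMatrix, LinearMap.det_toMatrix]

lemma refl_det {n : ℕ} (hn : 0 < n) (s : GL (Fin n) ℚ) (hs : IsReflection s) :
    ((s : Matrix (Fin n) (Fin n) ℚ)).det = -1 := by
  classical
  set S : Matrix (Fin n) (Fin n) ℚ := (s : Matrix (Fin n) (Fin n) ℚ) with hSdef
  set T : (Fin n → ℚ) →ₗ[ℚ] (Fin n → ℚ) := Matrix.toLin' S with hTdef
  have hS2 : S * S = 1 := by
    have := congrArg Units.val hs.1
    simpa using this
  have hT2 : ∀ x, T (T x) = x := by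
    intro x
    have : T ∘ₗ T = LinearMap.id := by
      rw [hTdef, ← Matrix.toLin'_mul, hS2, Matrix.toLin'_one]
    exact congrFun (congrArg (fun f => f.toFun) this) x
  set K : Submodule ℚ (Fin n → ℚ) := fixedSpace s with hKdef
  have hKmem : ∀ x, x ∈ K ↔ T x = x := by
    intro x
    rw [hKdef, fixedSpace, LinearMap.mem_ker, LinearMap.sub_apply, LinearMap.id_apply,
      sub_eq_zero]
  have hK : Module.finrank ℚ K = n - 1 := hs.2
  have hKne : K ≠ ⊤ := by
    intro h
    rw [h] at hK
    rw [finrank_top, Module.finrank_fin_fun] at hK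
    omega
  obtain ⟨w, hw⟩ : ∃ w, w ∉ K := by
    by_contra h
    push_neg at h
    exact hKne (Submodule.eq_top_iff'.mpr h)
  set v : Fin n → ℚ := T w - w with hvdef
  have hv : v ≠ 0 := by
    rw [hvdef, sub_ne_zero]
    intro h
    exact hw ((hKmem w).mpr h)
  have hTv : T v = -v := by
    rw [hvdef, map_sub, hT2]
    abel
  set L : Submodule ℚ (Fin n → ℚ) := Submodule.span ℚ {v} with hLdef
  have hTL : ∀ x ∈ L, T x = -x := by
    intro x hx
    obtain ⟨c, rfl⟩ := Submodule.mem_span_singleton.mp hx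
    rw [_root_.map_smul, hTv, smul_neg]
  have hdisj : Disjoint K L := by
    rw [Submodule.disjoint_def]
    intro x hxK hxL
    have h1 : T x = x := (hKmem x).mp hxK
    have h2 : T x = -x := hTL x hxL
    rw [h1] at h2
    have h3 : (2 : ℚ) • x = 0 := by
      rw [two_smul]
      nth_rewrite 1 [h2]
      abel
    simpa using h3
  have hL1 : Module.finrank ℚ L = 1 := finrank_span_singleton hv
  have hcompl : IsCompl K L := by
    refine ⟨hdisj, codisjoint_iff.mpr ?_⟩
    apply Submodule.eq_top_of_finrank_eq
    have := Submodule.finrank_sup_add_finrank_inf_eq K L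
    rw [Module.finrank_fin_fun]
    rw [disjoint_iff.mp hdisj, finrank_bot] at this
    omega
  set e := Submodule.prodEquivOfIsCompl K L hcompl with hedef
  have hconj : T = (e : K × L →ₗ[ℚ] (Fin n → ℚ)) ∘ₗ
      ((LinearMap.id : K →ₗ[ℚ] K).prodMap (-(LinearMap.id : L →ₗ[ℚ] L))) ∘ₗ
      (e.symm : (Fin n → ℚ) →ₗ[ℚ] K × L) := by
    apply LinearMap.ext
    intro x
    set p := e.symm x with hpdef
    have hx : x = (p.1 : Fin n → ℚ) + (p.2 : Fin n → ℚ) := by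
      have : e p = x := by rw [hpdef]; exact e.apply_symm_apply x
      rw [← this, Submodule.coe_prodEquivOfIsCompl']
    have h1 : T (p.1 : Fin n → ℚ) = p.1 := (hKmem _).mp p.1.2
    have h2 : T (p.2 : Fin n → ℚ) = -(p.2 : Fin n → ℚ) := hTL _ p.2.2
    simp only [LinearMap.comp_apply, LinearEquiv.coe_coe]
    rw [← hpdef]
    have : e (LinearMap.prodMap (LinearMap.id : K →ₗ[ℚ] K) (-(LinearMap.id : L →ₗ[ℚ] L)) p) = (p.1 : Fin n → ℚ) - p.2 := by
      rw [Submodule.coe_prodEquivOfIsCompl']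
      simp [sub_eq_add_neg]
    rw [this, hx, map_add, h1, h2]
    abel
  have hdetT : LinearMap.det T = -1 := by
    rw [hconj, LinearMap.det_conj, det_prodMap', LinearMap.det_id]
    have : (-(LinearMap.id : L →ₗ[ℚ] L)) = (-1 : ℚ) • LinearMap.id := by
      ext x; simp
    rw [this, LinearMap.det_smul, hL1, LinearMap.det_id]
    norm_num
  rw [← LinearMap.det_toLin' S, ← hTdef, hdetT]

/-- If `s ≠ t` are reflections in `GL_n(ℚ)` generating a finite subgroup
`R = ⟨s, t⟩`, then the only relative invariant of `R` lying in the sum of the subspaces of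
`s`-invariant and `t`-invariant polynomials is `0`. -/
theorem relInvariants_inf_sup_invariants_eq_bot {n : ℕ} (s t : GL (Fin n) ℚ)
    (hs : IsReflection s) (ht : IsReflection t) (hst : s ≠ t)
    (hfin : ((Subgroup.closure {s, t} : Subgroup (GL (Fin n) ℚ)) : Set (GL (Fin n) ℚ)).Finite) :
    polyRelInvariants (Subgroup.closure {s, t}) ⊓
      (polyInvariantsElem s ⊔ polyInvariantsElem t) = ⊥ := by
  rcases Nat.eq_zero_or_pos n with hn | hn
  · subst hn
    exact absurd (Units.ext (Subsingleton.elim _ _)) hst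
  rw [eq_bot_iff]
  intro f hf
  obtain ⟨hrel, hsum⟩ := Submodule.mem_inf.mp hf
  obtain ⟨a, ha, b, hb, rfl⟩ := Submodule.mem_sup.mp hsum
  set Sv : Matrix (Fin n) (Fin n) ℚ := (s : Matrix (Fin n) (Fin n) ℚ) with hSv
  set Tv : Matrix (Fin n) (Fin n) ℚ := (t : Matrix (Fin n) (Fin n) ℚ) with hTv
  have ha' : matAct Sv a = a := ha
  have hb' : matAct Tv b = b := hb
  have hsmem : s ∈ Subgroup.closure ({s, t} : Set (GL (Fin n) ℚ)) :=
    Subgroup.subset_closure (Set.mem_insert _ _)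
  have htmem : t ∈ Subgroup.closure ({s, t} : Set (GL (Fin n) ℚ)) :=
    Subgroup.subset_closure (Set.mem_insert_of_mem _ rfl)
  have hdetS : Sv.det = -1 := refl_det hn s hs
  have hdetT : Tv.det = -1 := refl_det hn t ht
  have hsf : matAct Sv (a + b) = -(a + b) := by
    have h := hrel s hsmem
    rw [← hSv] at h
    rw [h, hdetS, neg_smul, one_smul]
  have htf : matAct Tv (a + b) = -(a + b) := by
    have h := hrel t htmem
    rw [← hTv] at h
    rw [h, hdetT, neg_smul, one_smul]
  rw [map_add, ha'] at hsf
  rw [map_add, hb'] at htf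
  have hSb : matAct Sv b = -(2 * a) - b := by linear_combination hsf
  have hTa : matAct Tv a = -(2 * b) - a := by linear_combination htf
  have hfin0 : Finite ((Subgroup.closure {s, t} : Subgroup (GL (Fin n) ℚ)) :
      Set (GL (Fin n) ℚ)) := hfin.to_subtype
  have hfin' : Finite (Subgroup.closure ({s, t} : Set (GL (Fin n) ℚ))) := hfin0
  set u : (Subgroup.closure ({s, t} : Set (GL (Fin n) ℚ))) :=
    ⟨s * t, mul_mem hsmem htmem⟩ with hu
  set N := orderOf u with hN
  have hNpos : 0 < N := orderOf_pos u
  have hpow : (s * t) ^ N = 1 := by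
    have h1 : u ^ N = 1 := pow_orderOf_eq_one u
    have h2 := congrArg (Subtype.val) h1
    simpa using h2
  have hmat : (Sv * Tv) ^ N = (1 : Matrix (Fin n) (Fin n) ℚ) := by
    have h1 : ((s * t) ^ N : GL (Fin n) ℚ) = 1 := hpow
    have h2 := congrArg (fun (g : GL (Fin n) ℚ) => (g : Matrix (Fin n) (Fin n) ℚ)) h1
    simpa [Units.val_pow_eq_pow_val, Units.val_mul] using h2
  have key : ∀ k : ℕ, matAct ((Sv * Tv) ^ k) a
      = (2 * (k : MvPolynomial (Fin n) ℚ) + 1) * a + (2 * (k : MvPolynomial (Fin n) ℚ)) * b := by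
    intro k
    induction k with
    | zero => rw [pow_zero, matAct_one]; push_cast; ring
    | succ k ih =>
      rw [pow_succ', matAct_mul, ih, matAct_mul]
      have e1 : matAct Tv ((2 * (k : MvPolynomial (Fin n) ℚ) + 1) * a
          + (2 * (k : MvPolynomial (Fin n) ℚ)) * b)
          = (2 * (k : MvPolynomial (Fin n) ℚ) + 1) * (-(2 * b) - a)
            + (2 * (k : MvPolynomial (Fin n) ℚ)) * b := by
        simp only [map_add, _root_.map_mul, _root_.map_one, map_ofNat, map_natCast, hTa, hb']
      rw [e1]
      have e2 : matAct Sv ((2 * (k : MvPolynomial (Fin n) ℚ) + 1) * (-(2 * b) - a)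
          + (2 * (k : MvPolynomial (Fin n) ℚ)) * b)
          = (2 * (k : MvPolynomial (Fin n) ℚ) + 1) * (-(2 * (-(2 * a) - b)) - a)
            + (2 * (k : MvPolynomial (Fin n) ℚ)) * (-(2 * a) - b) := by
        simp only [map_add, map_sub, map_neg, _root_.map_mul, _root_.map_one, map_ofNat, map_natCast,
          ha', hSb]
      rw [e2]
      push_cast
      ring
  have hfinal := key N
  rw [hmat, matAct_one] at hfinal
  have hzero : ((2 * N : ℕ) : MvPolynomial (Fin n) ℚ) * (a + b) = 0 := by
    push_cast
    linear_combination -hfinal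
  have h2N : ((2 * N : ℕ) : MvPolynomial (Fin n) ℚ) ≠ 0 := by
    rw [Ne, Nat.cast_eq_zero]
    omega
  rcases mul_eq_zero.mp hzero with h | h
  · exact absurd h h2N
  · rw [Submodule.mem_bot]
    exact h
end

section
/- In the formal power series ring ℚ[[t]], the following identity holds: t + 2t·(1 − t²)^{−3} − 3t·(1 − t²)^{−2}·(1 − t⁴)^{−1} = Σ_{n=1}^{∞} ((2n² − 5 − 3·(−1)^n)/8) · t^{2n+1}. In particular, this series equals 2t⁷ + 3t⁹ + 6t¹¹ + 8t¹³ + 12t¹⁵ + 15t¹⁷ + ⋯ (the coefficients in degrees 1, 3, and 5 vanish). -/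
open PowerSeries

/-- The coefficient sequence of `Σ_{n ≥ 1} ((2n² − 5 − 3·(−1)ⁿ)/8) · t^{2n+1}`:
for `k = 2n + 1` with `n ≥ 1` it is `(2n² − 5 − 3·(−1)ⁿ)/8`, and it is `0` otherwise. -/
noncomputable def kacMoodyCoeff (k : ℕ) : ℚ :=
  if 3 ≤ k ∧ Odd k then
    (2 * (((k - 1) / 2 : ℕ) : ℚ) ^ 2 - 5 - 3 * (-1 : ℚ) ^ ((k - 1) / 2 : ℕ)) / 8
  else 0

/-- The formal power series `t + 2t·(1 − t²)⁻³ − 3t·(1 − t²)⁻²·(1 − t⁴)⁻¹ ∈ ℚ[[t]]`. -/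
noncomputable def kacMoodySeries : PowerSeries ℚ :=
  X + 2 * X * ((1 - X ^ 2)⁻¹) ^ 3 - 3 * X * ((1 - X ^ 2)⁻¹) ^ 2 * (1 - X ^ 4)⁻¹

private lemma kmc_even (k : ℕ) (hk : Even k) : kacMoodyCoeff k = 0 := by
  rw [kacMoodyCoeff, if_neg]
  rintro ⟨-, h⟩
  exact (Nat.not_odd_iff_even.mpr hk) h

private lemma kmc_odd (m : ℕ) :
    kacMoodyCoeff (2 * m + 3) =
      (2 * ((m : ℚ) + 1) ^ 2 - 5 - 3 * (-1 : ℚ) ^ (m + 1)) / 8 := by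
  have h1 : (2 * m + 3 - 1) / 2 = m + 1 := by omega
  rw [kacMoodyCoeff, if_pos ⟨by omega, ⟨m + 1, by ring⟩⟩, h1]
  push_cast
  ring

private lemma kmc_key (n : ℕ) :
    kacMoodyCoeff n =
      2 * (if n = 7 then (1 : ℚ) else 0) - 3 * (if n = 9 then (1 : ℚ) else 0)
      + (if n = 11 then (1 : ℚ) else 0)
      + (3 * (if 2 ≤ n then kacMoodyCoeff (n - 2) else 0)
        - 2 * (if 4 ≤ n then kacMoodyCoeff (n - 4) else 0)
        - 2 * (if 6 ≤ n then kacMoodyCoeff (n - 6) else 0)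
        + 3 * (if 8 ≤ n then kacMoodyCoeff (n - 8) else 0)
        - (if 10 ≤ n then kacMoodyCoeff (n - 10) else 0)) := by
  rcases lt_or_ge n 13 with h | h
  · interval_cases n <;> norm_num [kacMoodyCoeff, Nat.odd_iff]
  · rcases Nat.even_or_odd n with he | ho
    · have h2 : n % 2 = 0 := Nat.even_iff.mp he
      rw [kmc_even n he, kmc_even _ (Nat.even_iff.mpr (by omega)),
        kmc_even _ (Nat.even_iff.mpr (by omega)), kmc_even _ (Nat.even_iff.mpr (by omega)),
        kmc_even _ (Nat.even_iff.mpr (by omega)), kmc_even _ (Nat.even_iff.mpr (by omega))]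
      simp [show n ≠ 7 by omega, show n ≠ 9 by omega, show n ≠ 11 by omega]
    · have h2 : n % 2 = 1 := Nat.odd_iff.mp ho
      obtain ⟨j, rfl⟩ : ∃ j, n = 2 * j + 13 := ⟨(n - 13) / 2, by omega⟩
      have e1 : 2 * j + 13 = 2 * (j + 5) + 3 := by ring
      have e2 : 2 * j + 13 - 2 = 2 * (j + 4) + 3 := by omega
      have e3 : 2 * j + 13 - 4 = 2 * (j + 3) + 3 := by omega
      have e4 : 2 * j + 13 - 6 = 2 * (j + 2) + 3 := by omega
      have e5 : 2 * j + 13 - 8 = 2 * (j + 1) + 3 := by omega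
      have e6 : 2 * j + 13 - 10 = 2 * j + 3 := by omega
      rw [if_neg (by omega), if_neg (by omega), if_neg (by omega),
        if_pos (by omega), if_pos (by omega), if_pos (by omega),
        if_pos (by omega), if_pos (by omega),
        e2, e3, e4, e5, e6, e1, kmc_odd, kmc_odd, kmc_odd, kmc_odd, kmc_odd, kmc_odd]
      push_cast
      simp only [pow_add, pow_succ, pow_zero]
      ring

/-- In `ℚ[[t]]` one has
`t + 2t(1 − t²)⁻³ − 3t(1 − t²)⁻²(1 − t⁴)⁻¹ = Σ_{n=1}^∞ ((2n² − 5 − 3(−1)ⁿ)/8) t^{2n+1}`;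
in particular this series equals `2t⁷ + 3t⁹ + 6t¹¹ + 8t¹³ + 12t¹⁵ + 15t¹⁷ + ⋯`
(the coefficients in degrees 1, 3 and 5 vanish). -/
theorem kacMoodySeries_eq :
    kacMoodySeries = PowerSeries.mk kacMoodyCoeff ∧
    (∀ n : ℕ, 1 ≤ n → coeff (2 * n + 1) kacMoodySeries
      = (2 * (n : ℚ) ^ 2 - 5 - 3 * (-1 : ℚ) ^ n) / 8) ∧
    coeff 1 kacMoodySeries = 0 ∧ coeff 3 kacMoodySeries = 0 ∧
    coeff 5 kacMoodySeries = 0 ∧ coeff 7 kacMoodySeries = 2 ∧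
    coeff 9 kacMoodySeries = 3 ∧ coeff 11 kacMoodySeries = 6 ∧
    coeff 13 kacMoodySeries = 8 ∧ coeff 15 kacMoodySeries = 12 ∧
    coeff 17 kacMoodySeries = 15 := by
  have hu : (1 - X ^ 2 : ℚ⟦X⟧)⁻¹ * (1 - X ^ 2) = 1 :=
    PowerSeries.inv_mul_cancel _ (by simp)
  have hv : (1 - X ^ 4 : ℚ⟦X⟧)⁻¹ * (1 - X ^ 4) = 1 :=
    PowerSeries.inv_mul_cancel _ (by simp)
  have e3 : ((1 - X ^ 2 : ℚ⟦X⟧)⁻¹) ^ 3 * (1 - X ^ 2) ^ 3 = 1 := by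
    rw [← mul_pow, hu, one_pow]
  have e2 : ((1 - X ^ 2 : ℚ⟦X⟧)⁻¹) ^ 2 * (1 - X ^ 2) ^ 2 = 1 := by
    rw [← mul_pow, hu, one_pow]
  have hm : kacMoodySeries * ((1 - X ^ 2) ^ 3 * (1 - X ^ 4)) =
      2 * X ^ 7 - 3 * X ^ 9 + X ^ 11 := by
    have expand : kacMoodySeries * ((1 - X ^ 2) ^ 3 * (1 - X ^ 4)) =
        X * (1 - X ^ 2) ^ 3 * (1 - X ^ 4)
        + 2 * X * (1 - X ^ 4) * (((1 - X ^ 2)⁻¹) ^ 3 * (1 - X ^ 2) ^ 3)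
        - 3 * X * (1 - X ^ 2) * (((1 - X ^ 2)⁻¹) ^ 2 * (1 - X ^ 2) ^ 2)
          * ((1 - X ^ 4)⁻¹ * (1 - X ^ 4)) := by
      unfold kacMoodySeries; ring
    rw [expand, e3, e2, hv]
    ring
  have hS : kacMoodySeries =
      C 2 * X ^ 7 - C 3 * X ^ 9 + X ^ 11
      + (C 3 * (X ^ 2 * kacMoodySeries) - C 2 * (X ^ 4 * kacMoodySeries)
        - C 2 * (X ^ 6 * kacMoodySeries) + C 3 * (X ^ 8 * kacMoodySeries)
        - X ^ 10 * kacMoodySeries) := by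
    have c2 : (C 2 : ℚ⟦X⟧) = 2 := map_ofNat _ 2
    have c3 : (C 3 : ℚ⟦X⟧) = 3 := map_ofNat _ 3
    rw [c2, c3]
    linear_combination hm
  have main : ∀ n : ℕ, coeff n kacMoodySeries = kacMoodyCoeff n := by
    intro n
    induction n using Nat.strong_induction_on with
    | _ n ih =>
      have hco := congrArg (coeff n) hS
      simp only [map_add, map_sub, coeff_C_mul, coeff_X_pow, coeff_X_pow_mul'] at hco
      have hif : ∀ k, 0 < k → (if k ≤ n then coeff (n - k) kacMoodySeries else 0)
          = (if k ≤ n then kacMoodyCoeff (n - k) else 0) := by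
        intro k hk
        split_ifs with h
        · exact ih _ (by omega)
        · rfl
      rw [hif 2 (by norm_num), hif 4 (by norm_num), hif 6 (by norm_num),
        hif 8 (by norm_num), hif 10 (by norm_num)] at hco
      rw [hco, kmc_key n]
  refine ⟨?_, ?_, ?_, ?_, ?_, ?_, ?_, ?_, ?_, ?_, ?_⟩
  · ext n
    rw [main n, coeff_mk]
  · intro n hn
    obtain ⟨m, rfl⟩ : ∃ m, n = m + 1 := ⟨n - 1, by omega⟩
    rw [main, show 2 * (m + 1) + 1 = 2 * m + 3 from by ring, kmc_odd]
    push_cast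
    ring
  all_goals (rw [main]; norm_num [kacMoodyCoeff, Nat.odd_iff])
end

section
/- Let X be a finite set and let S be a nonempty finite family of subsets of X that is downward closed (if I ∈ S and J ⊆ I then J ∈ S), regarded as a poset under inclusion. Let S̄ ⊆ S be the full subposet consisting of all intersections of nonempty collections of maximal elements of S. Then for every ring R, every functor M : S^op → Mod_R, and every i ≥ 0, the canonical restriction map lim^i_{S^op} M → lim^i_{S̄^op} (M restricted to S̄^op) is an isomorphism, where lim^i denotes the i-th right derived functor of the limit. -/
open CategoryTheory CategoryTheory.Limits Opposite

/-- `I` is a maximal element of the family `S` of subsets of `α`. -/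
def IsMaxIn {α : Type} [DecidableEq α] (S : Finset (Finset α)) (I : Finset α) : Prop :=
  I ∈ S ∧ ∀ J ∈ S, I ⊆ J → J = I

/-- `I` is an intersection of a nonempty collection of maximal elements of `S`. -/
def IsInterOfMax {α : Type} [DecidableEq α] (S : Finset (Finset α)) (I : Finset α) : Prop :=
  ∃ (T : Finset (Finset α)) (hT : T.Nonempty),
    (∀ J ∈ T, IsMaxIn S J) ∧ I = T.inf' hT id

/-- The family `S`, regarded as a poset under inclusion. -/
abbrev SPoset {α : Type} [DecidableEq α] (S : Finset (Finset α)) : Type :=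
  {I : Finset α // I ∈ S}

/-- The full subposet `S̄ ⊆ S` of all intersections of nonempty collections of maximal
elements of `S`.  (When `S` is downward closed every such intersection belongs to `S`.) -/
abbrev SBarPoset {α : Type} [DecidableEq α] (S : Finset (Finset α)) : Type :=
  {I : Finset α // I ∈ S ∧ IsInterOfMax S I}

/-- The inclusion functor of the full subposet `S̄ ⊆ S`. -/
def sbarIncl {α : Type} [DecidableEq α] (S : Finset (Finset α)) : SBarPoset S ⥤ SPoset S :=
  Monotone.functor (f := fun I => (⟨I.1, I.2.1⟩ : SPoset S)) fun _ _ h => h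

/-- The limit functor on diagrams of modules indexed by a small category is additive. -/
noncomputable instance limAdditiveModuleCat (J : Type) [SmallCategory J] (R : Type) [Ring R] :
    (lim : (J ⥤ ModuleCat R) ⥤ ModuleCat R).Additive :=
  Functor.additive_of_preserves_binary_products _

instance whiskeringLeftAdditive {α : Type} [DecidableEq α] (S : Finset (Finset α))
    (R : Type) [Ring R] :
    (((Functor.whiskeringLeft (SBarPoset S)ᵒᵖ (SPoset S)ᵒᵖ (ModuleCat R)).obj
      (sbarIncl S).op)).Additive where
  map_add := by intros; ext; rfl

/-- The canonical natural transformation from the limit over `Sᵒᵖ` to the limit over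
`S̄ᵒᵖ` of the restricted diagram, given by restriction of cones. -/
noncomputable def limRestrictNT {α : Type} [DecidableEq α] (S : Finset (Finset α))
    (R : Type) [Ring R] :
    (lim : ((SPoset S)ᵒᵖ ⥤ ModuleCat R) ⥤ ModuleCat R) ⟶
      (Functor.whiskeringLeft (SBarPoset S)ᵒᵖ (SPoset S)ᵒᵖ (ModuleCat R)).obj (sbarIncl S).op ⋙
        lim where
  app M := limit.pre M (sbarIncl S).op
  naturality := by
    intro M N f
    apply limit.hom_ext
    intro j
    simp

section Aux
variable {α : Type} [DecidableEq α] (S : Finset (Finset α))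

lemma exists_max_above {J : Finset α} (hJ : J ∈ S) : ∃ K, IsMaxIn S K ∧ J ⊆ K := by
  classical
  obtain ⟨K, hKmem, hKmax⟩ := (S.filter (fun K => J ⊆ K)).exists_max_image Finset.card
    ⟨J, Finset.mem_filter.2 ⟨hJ, subset_rfl⟩⟩
  rw [Finset.mem_filter] at hKmem
  refine ⟨K, ⟨hKmem.1, fun J' hJ' hsub => ?_⟩, hKmem.2⟩
  exact (Finset.eq_of_subset_of_card_le hsub
    (hKmax J' (Finset.mem_filter.2 ⟨hJ', hKmem.2.trans hsub⟩))).symm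

open Classical in
noncomputable def maxT (J : Finset α) : Finset (Finset α) :=
  S.filter (fun K => IsMaxIn S K ∧ J ⊆ K)

lemma maxT_nonempty {J : Finset α} (hJ : J ∈ S) : (maxT S J).Nonempty := by
  classical
  obtain ⟨K, hK, hJK⟩ := exists_max_above S hJ
  exact ⟨K, by simp [maxT, hK, hJK, hK.1]⟩

noncomputable def rObj {J : Finset α} (hJ : J ∈ S) : Finset α :=
  (maxT S J).inf' (maxT_nonempty S hJ) id

lemma mem_maxT {J K : Finset α} : K ∈ maxT S J ↔ IsMaxIn S K ∧ J ⊆ K := by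
  classical
  simp only [maxT, Finset.mem_filter]
  exact ⟨fun h => h.2, fun h => ⟨h.1.1, h⟩⟩

lemma subset_rObj {J : Finset α} (hJ : J ∈ S) : J ⊆ rObj S hJ :=
  Finset.le_inf' _ _ fun K hK => ((mem_maxT S).1 hK).2

lemma rObj_isInter {J : Finset α} (hJ : J ∈ S) : IsInterOfMax S (rObj S hJ) :=
  ⟨maxT S J, maxT_nonempty S hJ, fun K hK => ((mem_maxT S).1 hK).1, rfl⟩

lemma rObj_mem (hdown : ∀ I ∈ S, ∀ J ⊆ I, J ∈ S) {J : Finset α} (hJ : J ∈ S) :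
    rObj S hJ ∈ S := by
  obtain ⟨K, hK⟩ := maxT_nonempty S hJ
  have : rObj S hJ ≤ K := Finset.inf'_le id hK
  exact hdown K ((mem_maxT S).1 hK).1.1 _ this

lemma rObj_subset_of_inter {J I : Finset α} (hJ : J ∈ S) (hI : IsInterOfMax S I)
    (hJI : J ⊆ I) : rObj S hJ ⊆ I := by
  obtain ⟨T, hT, hTmax, rfl⟩ := hI
  show rObj S hJ ≤ T.inf' hT id
  refine Finset.le_inf' _ _ fun K hK => Finset.inf'_le _ ?_
  refine (mem_maxT S).2 ⟨hTmax K hK, hJI.trans ?_⟩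
  exact (Finset.inf'_le id hK : T.inf' hT id ≤ K)

variable (hdown : ∀ I ∈ S, ∀ J ⊆ I, J ∈ S)

noncomputable def rFun : SPoset S → SBarPoset S :=
  fun J => ⟨rObj S J.2, rObj_mem S hdown J.2, rObj_isInter S J.2⟩

lemma rFun_mono : Monotone (rFun S hdown) := fun J J' h => by
  show rObj S J.2 ⊆ rObj S J'.2
  have h1 : J.1 ⊆ J'.1 := h
  exact rObj_subset_of_inter S J.2 (rObj_isInter S J'.2) (h1.trans (subset_rObj S J'.2))

noncomputable def rFunctor : SPoset S ⥤ SBarPoset S :=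
  (rFun_mono S hdown).functor

noncomputable def radj : rFunctor S hdown ⊣ sbarIncl S :=
  Adjunction.mkOfHomEquiv
    { homEquiv := fun J I =>
        { toFun := fun f => homOfLE ((subset_rObj S J.2).trans f.le)
          invFun := fun f => homOfLE (rObj_subset_of_inter S J.2 I.2.2 f.le)
          left_inv := fun _ => Subsingleton.elim _ _
          right_inv := fun _ => Subsingleton.elim _ _ }
      homEquiv_naturality_left_symm := fun _ _ => Subsingleton.elim _ _
      homEquiv_naturality_right := fun _ _ => Subsingleton.elim _ _ }

end Aux

/-- Let `X` be a finite set and `S` a nonempty, downward closed family of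
subsets of `X`, and let `S̄ ⊆ S` be the full subposet of intersections of nonempty
collections of maximal elements of `S`.  Then for every ring `R`, every diagram
`M : Sᵒᵖ ⥤ Mod_R` and every `i ≥ 0`, the canonical restriction map
`lim^i_{Sᵒᵖ} M → lim^i_{S̄ᵒᵖ} (M|_{S̄ᵒᵖ})` is an isomorphism: the natural transformation of
right derived functors induced by the canonical restriction-of-cones transformation
`lim ⟶ (restrict ⋙ lim)` is an isomorphism at `M`, and the target identifies with
`lim^i` of the restricted diagram.  (Enough injectives for the functor categories, true
since they are Grothendieck abelian categories, is recorded as instance arguments.) -/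
theorem lim_rightDerived_restrict_isIso {α : Type} [Fintype α] [DecidableEq α]
    (S : Finset (Finset α)) (hne : S.Nonempty)
    (hdown : ∀ I ∈ S, ∀ J ⊆ I, J ∈ S) (R : Type) [Ring R]
    [EnoughInjectives ((SPoset S)ᵒᵖ ⥤ ModuleCat R)]
    [EnoughInjectives ((SBarPoset S)ᵒᵖ ⥤ ModuleCat R)]
    (M : (SPoset S)ᵒᵖ ⥤ ModuleCat R) (i : ℕ) :
    IsIso ((NatTrans.rightDerived (limRestrictNT S R) i).app M) ∧
      Nonempty
        ((((Functor.whiskeringLeft (SBarPoset S)ᵒᵖ (SPoset S)ᵒᵖ (ModuleCat R)).obj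
              (sbarIncl S).op ⋙ lim).rightDerived i).obj M ≅
          ((lim : ((SBarPoset S)ᵒᵖ ⥤ ModuleCat R) ⥤ ModuleCat R).rightDerived i).obj
            ((sbarIncl S).op ⋙ M)) := by
  classical
  haveI : (sbarIncl S).Final := Functor.final_of_adjunction (radj S hdown)
  haveI : (sbarIncl S).op.Initial := Functor.initial_op_of_final _
  constructor
  · haveI : ∀ N : (SPoset S)ᵒᵖ ⥤ ModuleCat R, IsIso ((limRestrictNT S R).app N) := fun N => by
      show IsIso (limit.pre N (sbarIncl S).op)
      infer_instance
    haveI : IsIso (limRestrictNT S R) := NatIso.isIso_of_isIso_app _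
    haveI : IsIso (NatTrans.rightDerived (limRestrictNT S R) i) := by
      refine ⟨NatTrans.rightDerived (inv (limRestrictNT S R)) i, ?_, ?_⟩
      · rw [← NatTrans.rightDerived_comp, IsIso.hom_inv_id, NatTrans.rightDerived_id]
      · rw [← NatTrans.rightDerived_comp, IsIso.inv_hom_id, NatTrans.rightDerived_id]
    infer_instance
  · set Φ := (Functor.whiskeringLeft (SBarPoset S)ᵒᵖ (SPoset S)ᵒᵖ (ModuleCat R)).obj
      (sbarIncl S).op with hΦ
    obtain ⟨P⟩ := (HasInjectiveResolution.out (Z := M))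
    have adjW := Adjunction.whiskerLeft (C := ModuleCat R)
      (Adjunction.op (radj S hdown))
    haveI : Φ.PreservesHomology := inferInstance
    let Q : InjectiveResolution (Φ.obj M) :=
      { cocomplex := (Φ.mapHomologicalComplex _).obj P.cocomplex
        injective := fun n => Injective.injective_of_adjoint adjW _
        ι := (HomologicalComplex.singleMapHomologicalComplex Φ (ComplexShape.up ℕ) 0).inv.app M ≫
              (Φ.mapHomologicalComplex _).map P.ι
        quasiIso := inferInstance }
    refine ⟨P.isoRightDerivedObj (Φ ⋙ lim) i ≪≫ ?_ ≪≫ (Q.isoRightDerivedObj lim i).symm⟩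
    exact Iso.refl _
end
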